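/- Let α ∈ (0,1), β > 0, let g : ℝ^d → ℝ^d satisfy a global Lipschitz condition with constant L > 0, let T > 0, and let x₀ ∈ ℝ^d. Then there exists a unique continuous function x : [0,T] → ℝ^d satisfying the integral equation with substantial time derivative kernel: x(t) = x₀ + (1/Γ(α)) ∫₀ᵗ (t−s)^{α−1} e^{−β(t−s)} g(x(s)) ds for all t ∈ [0,T]. -/

import Mathlib

open Real MeasureTheory Set intervalIntegral


lemma aux_kint {α c : ℝ} (hα : α ∈ Set.Ioo (0:ℝ) 1) (hc : 0 ≤ c) {a b : ℝ}
    (ha : 0 ≤ a) (hb : 0 ≤ b) :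
    IntervalIntegrable (fun u => u ^ (α - 1) * Real.exp (-(c * u))) volume a b := by
  refine (intervalIntegrable_rpow' (r := α - 1) (by linarith [hα.1])).mono_fun ?_ ?_
  · apply Measurable.aestronglyMeasurable
    exact (measurable_id.pow_const _).mul (measurable_const.mul measurable_id).neg.exp
  · filter_upwards [ae_restrict_mem measurableSet_uIoc] with u hu
    have hu0 : 0 < u := lt_of_le_of_lt (le_min ha hb) hu.1
    have h1 : Real.exp (-(c * u)) ≤ 1 := Real.exp_le_one_iff.mpr (by nlinarith)
    have h2 : (0:ℝ) ≤ u ^ (α - 1) := Real.rpow_nonneg hu0.le _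
    rw [Real.norm_eq_abs, Real.norm_eq_abs, abs_mul, abs_of_nonneg h2,
      abs_of_nonneg (Real.exp_nonneg _)]
    exact mul_le_of_le_one_right h2 h1

lemma aux_intOn {α lam : ℝ} (hα : α ∈ Set.Ioo (0:ℝ) 1) (hlam : 0 < lam) :
    IntegrableOn (fun u : ℝ => u ^ (α - 1) * Real.exp (-(lam * u))) (Ioi 0) := by
  have h0 := Real.GammaIntegral_convergent hα.1
  have h1 : IntegrableOn (fun u : ℝ => Real.exp (-(lam * u)) * (lam * u) ^ (α - 1)) (Ioi 0) := by
    have := (integrableOn_Ioi_comp_mul_left_iff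
        (fun x : ℝ => Real.exp (-x) * x ^ (α - 1)) 0 hlam).mpr (by simpa using h0)
    simpa using this
  have h2 := h1.const_mul (lam ^ (1 - α))
  refine IntegrableOn.congr_fun (f := fun u : ℝ => lam ^ (1-α) * (Real.exp (-(lam * u)) * (lam * u) ^ (α - 1))) h2 (fun u hu => ?_) measurableSet_Ioi
  have hu0 : (0:ℝ) < u := hu
  simp only
  rw [Real.mul_rpow hlam.le hu0.le, show lam ^ (1-α) * (Real.exp (-(lam*u)) * (lam ^ (α-1) * u ^ (α-1))) = (lam ^ (1-α) * lam ^ (α-1)) * (u ^ (α-1) * Real.exp (-(lam*u))) by ring, ← Real.rpow_add hlam]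
  norm_num

lemma aux_gamma_bound {α lam : ℝ} (hα : α ∈ Set.Ioo (0:ℝ) 1) (hlam : 0 < lam) {t : ℝ}
    (ht : 0 ≤ t) :
    ∫ u in (0:ℝ)..t, u ^ (α - 1) * Real.exp (-(lam * u)) ≤ Real.Gamma α / lam ^ α := by
  rw [intervalIntegral.integral_of_le ht]
  have h1 : ∫ u in Ioc 0 t, u ^ (α - 1) * Real.exp (-(lam * u)) ≤
      ∫ u in Ioi 0, u ^ (α - 1) * Real.exp (-(lam * u)) := by
    refine setIntegral_mono_set (aux_intOn hα hlam) ?_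
      (HasSubset.Subset.eventuallyLE Ioc_subset_Ioi_self)
    filter_upwards [ae_restrict_mem measurableSet_Ioi] with u hu
    exact mul_nonneg (Real.rpow_nonneg (le_of_lt hu) _) (Real.exp_nonneg _)
  refine h1.trans ?_
  rw [Real.integral_rpow_mul_exp_neg_mul_Ioi hα.1 hlam]
  rw [show (1/lam) ^ α = (lam ^ α)⁻¹ by rw [one_div, Real.inv_rpow hlam.le],
    inv_mul_eq_div]




lemma aux_int2 {α β : ℝ} (hα : α ∈ Set.Ioo (0:ℝ) 1) (hβ : 0 < β)
    {E : Type*} [NormedAddCommGroup E] [NormedSpace ℝ E]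
    {h : ℝ → E} (hh : Continuous h) (t : ℝ) {a b : ℝ} (ha : 0 ≤ a) (hb : 0 ≤ b) :
    IntervalIntegrable (fun u => (u ^ (α - 1) * Real.exp (-(β * u))) • h (t - u))
      volume a b := by
  obtain ⟨C, hC⟩ := (isCompact_Icc (a := t - max a b) (b := t)).exists_bound_of_continuousOn
    hh.continuousOn
  have hmax : 0 ≤ max a b := le_trans ha (le_max_left a b)
  have hC0 : 0 ≤ C := le_trans (norm_nonneg _) (hC t ⟨by linarith, le_refl t⟩)
  refine ((aux_kint hα hβ.le ha hb).const_mul C).mono_fun ?_ ?_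
  · exact (((measurable_id.pow_const _).mul
      (measurable_const.mul measurable_id).neg.exp).stronglyMeasurable.smul
      ((hh.comp (continuous_const.sub continuous_id)).stronglyMeasurable)).aestronglyMeasurable
  · filter_upwards [ae_restrict_mem measurableSet_uIoc] with u hu
    rw [Set.uIoc] at hu
    have hu0 : 0 < u := lt_of_le_of_lt (le_min ha hb) hu.1
    have hk0 : 0 ≤ u ^ (α - 1) * Real.exp (-(β * u)) :=
      mul_nonneg (Real.rpow_nonneg hu0.le _) (Real.exp_nonneg _)
    rw [norm_smul, Real.norm_eq_abs, abs_of_nonneg hk0, Real.norm_eq_abs, abs_mul,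
      abs_of_nonneg hC0, abs_of_nonneg hk0, mul_comm C]
    refine mul_le_mul_of_nonneg_left (hC _ ⟨?_, ?_⟩) hk0
    · have : u ≤ max a b := hu.2
      linarith
    · linarith

lemma aux_cont {α β T : ℝ} (hα : α ∈ Set.Ioo (0:ℝ) 1) (hβ : 0 < β) (hT : 0 < T)
    {E : Type*} [NormedAddCommGroup E] [NormedSpace ℝ E]
    {h : ℝ → E} (hh : Continuous h) :
    ContinuousOn (fun t => ∫ u in (0:ℝ)..t, (u ^ (α - 1) * Real.exp (-(β * u))) • h (t - u))
      (Icc 0 T) := by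
  obtain ⟨C, hC⟩ := (isCompact_Icc (a := -T) (b := T)).exists_bound_of_continuousOn
    hh.continuousOn
  have hC0 : 0 ≤ C := le_trans (norm_nonneg _) (hC 0 ⟨by linarith, by linarith⟩)
  intro t₀ ht₀
  have ht₀0 : 0 ≤ t₀ := ht₀.1
  have ht₀T : t₀ ≤ T := ht₀.2
  have hA : ContinuousWithinAt
      (fun t => ∫ u in (0:ℝ)..t₀, (u ^ (α - 1) * Real.exp (-(β * u))) • h (t - u))
      (Icc 0 T) t₀ := by
    apply intervalIntegral.continuousWithinAt_of_dominated_interval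
      (bound := fun u => C * (u ^ (α - 1) * Real.exp (-(β * u))))
    · filter_upwards with t
      exact (((measurable_id.pow_const _).mul
        (measurable_const.mul measurable_id).neg.exp).stronglyMeasurable.smul
        ((hh.comp (continuous_const.sub continuous_id)).stronglyMeasurable)).aestronglyMeasurable
    · filter_upwards [self_mem_nhdsWithin] with t ht
      filter_upwards with u hu
      rw [Set.uIoc_of_le ht₀0] at hu
      have hk0 : 0 ≤ u ^ (α - 1) * Real.exp (-(β * u)) :=
        mul_nonneg (Real.rpow_nonneg hu.1.le _) (Real.exp_nonneg _)
      rw [norm_smul, Real.norm_eq_abs, abs_of_nonneg hk0, mul_comm C]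
      refine mul_le_mul_of_nonneg_left (hC _ ⟨?_, ?_⟩) hk0
      · have := ht.1; have := hu.2; have := ht₀T; linarith
      · have := ht.2; have := hu.1; linarith
    · exact (aux_kint hα hβ.le le_rfl ht₀0).const_mul C
    · filter_upwards with u hu
      exact (continuous_const.smul (hh.comp (continuous_id.sub continuous_const))).continuousWithinAt
  have hB : Filter.Tendsto
      (fun t => ∫ u in t₀..t, (u ^ (α - 1) * Real.exp (-(β * u))) • h (t - u))
      (nhdsWithin t₀ (Icc 0 T)) (nhds 0) := by
    have hbnd : ∀ t ∈ Icc (0:ℝ) T,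
        ‖∫ u in t₀..t, (u ^ (α - 1) * Real.exp (-(β * u))) • h (t - u)‖ ≤
          C * |(t ^ α - t₀ ^ α) / α| := by
      intro t ht
      have h1 : ‖∫ u in t₀..t, (u ^ (α - 1) * Real.exp (-(β * u))) • h (t - u)‖ ≤
          |∫ u in t₀..t, C * u ^ (α - 1)| := by
        apply intervalIntegral.norm_integral_le_abs_of_norm_le
        · filter_upwards [ae_restrict_mem measurableSet_uIoc] with u hu
          rw [Set.uIoc] at hu
          have hu0 : 0 < u := lt_of_le_of_lt (le_min ht₀0 ht.1) hu.1
          have huT : u ≤ T := le_trans hu.2 (max_le ht₀T ht.2)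
          have hr0 : (0:ℝ) ≤ u ^ (α - 1) := Real.rpow_nonneg hu0.le _
          have hk0 : 0 ≤ u ^ (α - 1) * Real.exp (-(β * u)) :=
            mul_nonneg hr0 (Real.exp_nonneg _)
          rw [norm_smul, Real.norm_eq_abs, abs_of_nonneg hk0]
          have hhb : ‖h (t - u)‖ ≤ C := by
            refine hC _ ⟨?_, ?_⟩
            · have := ht.1; linarith
            · have := ht.2; linarith
          have hexp : Real.exp (-(β * u)) ≤ 1 := Real.exp_le_one_iff.mpr (by nlinarith)
          calc u ^ (α - 1) * Real.exp (-(β * u)) * ‖h (t - u)‖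
              ≤ u ^ (α - 1) * 1 * C := by
                apply mul_le_mul _ hhb (norm_nonneg _) (by nlinarith)
                exact mul_le_mul_of_nonneg_left hexp hr0
            _ = C * u ^ (α - 1) := by ring
        · exact (intervalIntegrable_rpow' (by linarith [hα.1])).const_mul C
      have h2 : (∫ u in t₀..t, C * u ^ (α - 1)) = C * ((t ^ α - t₀ ^ α) / α) := by
        rw [intervalIntegral.integral_const_mul, integral_rpow (Or.inl (by linarith [hα.1]))]
        norm_num
      refine h1.trans (le_of_eq ?_)
      rw [h2, abs_mul, abs_of_nonneg hC0]
    apply squeeze_zero_norm'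
    · filter_upwards [self_mem_nhdsWithin] with t ht using hbnd t ht
    · have hc : ContinuousAt (fun t : ℝ => C * |(t ^ α - t₀ ^ α) / α|) t₀ := by
        have h3 : ContinuousAt (fun t : ℝ => t ^ α) t₀ :=
          Real.continuousAt_rpow_const t₀ α (Or.inr hα.1.le)
        exact (((h3.sub continuousAt_const).div_const α).abs).const_mul C
      have h4 := (hc.continuousWithinAt (s := Icc 0 T)).tendsto
      simpa using h4
  have hsum : ContinuousWithinAt
      (fun t => (∫ u in (0:ℝ)..t₀, (u ^ (α - 1) * Real.exp (-(β * u))) • h (t - u)) +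
        ∫ u in t₀..t, (u ^ (α - 1) * Real.exp (-(β * u))) • h (t - u)) (Icc 0 T) t₀ := by
    refine hA.add ?_
    simpa [ContinuousWithinAt, intervalIntegral.integral_same] using hB
  refine hsum.congr (fun t ht => ?_) ?_
  · exact (intervalIntegral.integral_add_adjacent_intervals
      (aux_int2 hα hβ hh t le_rfl ht₀0) (aux_int2 hα hβ hh t ht₀0 ht.1)).symm
  · exact (intervalIntegral.integral_add_adjacent_intervals
      (aux_int2 hα hβ hh t₀ le_rfl ht₀0) (aux_int2 hα hβ hh t₀ ht₀0 ht₀0)).symm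

lemma aux_bound {α β lam : ℝ} (hα : α ∈ Set.Ioo (0:ℝ) 1) (hβ : 0 < β) (hlam : 0 < lam)
    {E : Type*} [NormedAddCommGroup E] [NormedSpace ℝ E]
    {D : ℝ → E} {t : ℝ} (ht : 0 ≤ t) {A : ℝ} (hA : 0 ≤ A)
    (hDb : ∀ s ∈ Icc (0:ℝ) t, ‖D s‖ ≤ A * Real.exp (lam * s)) :
    ‖∫ u in (0:ℝ)..t, (u ^ (α - 1) * Real.exp (-(β * u))) • D (t - u)‖ ≤
      A * Real.exp (lam * t) * (Real.Gamma α / lam ^ α) := by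
  have h1 : ‖∫ u in (0:ℝ)..t, (u ^ (α - 1) * Real.exp (-(β * u))) • D (t - u)‖ ≤
      |∫ u in (0:ℝ)..t, A * Real.exp (lam * t) * (u ^ (α - 1) * Real.exp (-(lam * u)))| := by
    apply intervalIntegral.norm_integral_le_abs_of_norm_le
    · filter_upwards [ae_restrict_mem measurableSet_uIoc] with u hu
      rw [Set.uIoc_of_le ht] at hu
      have hu0 : 0 < u := hu.1
      have hr0 : (0:ℝ) ≤ u ^ (α - 1) := Real.rpow_nonneg hu0.le _
      have hk0 : 0 ≤ u ^ (α - 1) * Real.exp (-(β * u)) :=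
        mul_nonneg hr0 (Real.exp_nonneg _)
      rw [norm_smul, Real.norm_eq_abs, abs_of_nonneg hk0]
      have hDb' : ‖D (t - u)‖ ≤ A * Real.exp (lam * (t - u)) := by
        refine hDb _ ⟨by linarith [hu.2], by linarith⟩
      have hexpβ : Real.exp (-(β * u)) ≤ 1 := Real.exp_le_one_iff.mpr (by nlinarith)
      have hsplit : Real.exp (lam * (t - u)) = Real.exp (lam * t) * Real.exp (-(lam * u)) := by
        rw [← Real.exp_add]; ring_nf
      calc u ^ (α - 1) * Real.exp (-(β * u)) * ‖D (t - u)‖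
          ≤ u ^ (α - 1) * Real.exp (-(β * u)) * (A * Real.exp (lam * (t - u))) :=
            mul_le_mul_of_nonneg_left hDb' hk0
        _ = (A * Real.exp (lam * t) * (u ^ (α - 1) * Real.exp (-(lam * u)))) *
              Real.exp (-(β * u)) := by rw [hsplit]; ring
        _ ≤ (A * Real.exp (lam * t) * (u ^ (α - 1) * Real.exp (-(lam * u)))) * 1 := by
            refine mul_le_mul_of_nonneg_left hexpβ (by positivity)
        _ = A * Real.exp (lam * t) * (u ^ (α - 1) * Real.exp (-(lam * u))) := mul_one _
    · exact (aux_kint hα hlam.le le_rfl ht).const_mul _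
  refine h1.trans ?_
  rw [intervalIntegral.integral_const_mul]
  have hI0 : 0 ≤ ∫ u in (0:ℝ)..t, u ^ (α - 1) * Real.exp (-(lam * u)) := by
    apply intervalIntegral.integral_nonneg ht
    intro u hu
    exact mul_nonneg (Real.rpow_nonneg hu.1 _) (Real.exp_nonneg _)
  rw [abs_mul, abs_of_nonneg (by positivity : (0:ℝ) ≤ A * Real.exp (lam * t)),
    abs_of_nonneg hI0]
  exact mul_le_mul_of_nonneg_left (aux_gamma_bound hα hlam ht) (by positivity)

theorem stmt14 {d : ℕ} (α β : ℝ) (hα : α ∈ Set.Ioo (0:ℝ) 1) (hβ : 0 < β)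
    (g : EuclideanSpace ℝ (Fin d) → EuclideanSpace ℝ (Fin d))
    (L : ℝ) (hL : 0 < L)
    (hg : ∀ x y : EuclideanSpace ℝ (Fin d), ‖g x - g y‖ ≤ L * ‖x - y‖)
    (T : ℝ) (hT : 0 < T)
    (x₀ : EuclideanSpace ℝ (Fin d)) :
    ∃ x : ℝ → EuclideanSpace ℝ (Fin d),
      (ContinuousOn x (Set.Icc 0 T) ∧
        ∀ t ∈ Set.Icc (0:ℝ) T,
          x t = x₀ + (1 / Real.Gamma α) •
            ∫ s in (0:ℝ)..t,
              (((t - s) ^ (α - 1)) * Real.exp (-β * (t - s))) • g (x s)) ∧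
      ∀ y : ℝ → EuclideanSpace ℝ (Fin d),
        ContinuousOn y (Set.Icc 0 T) →
        (∀ t ∈ Set.Icc (0:ℝ) T,
          y t = x₀ + (1 / Real.Gamma α) •
            ∫ s in (0:ℝ)..t,
              (((t - s) ^ (α - 1)) * Real.exp (-β * (t - s))) • g (y s)) →
        ∀ t ∈ Set.Icc (0:ℝ) T, y t = x t := by
  obtain ⟨hα0, hα1⟩ := id hα
  have hΓ : 0 < Real.Gamma α := Real.Gamma_pos_of_pos hα0
  have hT0 : (0:ℝ) ≤ T := hT.le
  set lam : ℝ := (2 * L) ^ (α⁻¹ : ℝ) with hlam_def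
  have hlam : 0 < lam := Real.rpow_pos_of_pos (by linarith) _
  have hlam_pow : lam ^ α = 2 * L := Real.rpow_inv_rpow (by linarith) (ne_of_gt hα0)
  have hgL : LipschitzWith (Real.toNNReal L) g := by
    apply LipschitzWith.of_dist_le_mul
    intro x y
    rw [dist_eq_norm, dist_eq_norm, Real.coe_toNNReal L hL.le]
    exact hg x y
  have hgc : Continuous g := hgL.continuous
  set X := C(Set.Icc (0:ℝ) T, EuclideanSpace ℝ (Fin d)) with hX
  haveI : Nonempty X := ⟨ContinuousMap.const _ x₀⟩
  set xf : X → ℝ → EuclideanSpace ℝ (Fin d) :=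
    fun u s => Real.exp (lam * s) • Set.IccExtend hT0 u s with hxf
  have hxfc : ∀ u : X, Continuous (xf u) := fun u =>
    (Real.continuous_exp.comp (continuous_const.mul continuous_id)).smul
      (Continuous.Icc_extend' u.continuous)
  set J : X → ℝ → EuclideanSpace ℝ (Fin d) :=
    fun u t => ∫ w in (0:ℝ)..t, (w ^ (α - 1) * Real.exp (-(β * w))) • g (xf u (t - w))
    with hJ
  have hJc : ∀ u : X, ContinuousOn (J u) (Set.Icc 0 T) :=
    fun u => aux_cont hα hβ hT (hgc.comp (hxfc u))
  set Q : X → X := fun u =>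
    ⟨fun t => Real.exp (-(lam * t.1)) • (x₀ + (1 / Real.Gamma α) • J u t.1), by
      refine Continuous.smul (f := fun t : Set.Icc (0:ℝ) T => Real.exp (-(lam * t.1)))
        (g := fun t : Set.Icc (0:ℝ) T => x₀ + (1 / Real.Gamma α) • J u t.1) ?_ (continuous_const.add ?_)
      · exact Real.continuous_exp.comp (continuous_const.mul continuous_subtype_val).neg
      · exact ((hJc u).restrict).const_smul (1 / Real.Gamma α)⟩ with hQdef
  have key : ∀ u v : X, ∀ t : Set.Icc (0:ℝ) T, dist (Q u t) (Q v t) ≤ (1/2) * dist u v := by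
    intro u v tt
    obtain ⟨t, ht⟩ := tt
    rw [dist_eq_norm]
    have hQd : Q u ⟨t, ht⟩ - Q v ⟨t, ht⟩ =
        Real.exp (-(lam * t)) • ((1 / Real.Gamma α) • (J u t - J v t)) := by
      show Real.exp (-(lam * t)) • (x₀ + (1 / Real.Gamma α) • J u t) -
        Real.exp (-(lam * t)) • (x₀ + (1 / Real.Gamma α) • J v t) = _
      rw [← smul_sub, add_sub_add_left_eq_sub, ← smul_sub]
    have hJd : J u t - J v t =
        ∫ w in (0:ℝ)..t, (w ^ (α - 1) * Real.exp (-(β * w))) •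
          ((fun s => g (xf u s) - g (xf v s)) (t - w)) := by
      rw [show (fun w => (w ^ (α - 1) * Real.exp (-(β * w))) •
          ((fun s => g (xf u s) - g (xf v s)) (t - w))) = fun w =>
          (w ^ (α - 1) * Real.exp (-(β * w))) • g (xf u (t - w)) -
          (w ^ (α - 1) * Real.exp (-(β * w))) • g (xf v (t - w)) from
          funext fun w => smul_sub _ _ _]
      rw [hJ]
      exact (intervalIntegral.integral_sub
        (aux_int2 hα hβ (hgc.comp (hxfc u)) t le_rfl ht.1)
        (aux_int2 hα hβ (hgc.comp (hxfc v)) t le_rfl ht.1)).symm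
    have hDb : ∀ s ∈ Set.Icc (0:ℝ) t, ‖g (xf u s) - g (xf v s)‖ ≤
        (L * dist u v) * Real.exp (lam * s) := by
      intro s hs
      refine (hg _ _).trans ?_
      have h8 : xf u s - xf v s =
          Real.exp (lam * s) • (Set.IccExtend hT0 (⇑u) s - Set.IccExtend hT0 (⇑v) s) :=
        (smul_sub _ _ _).symm
      rw [h8, norm_smul, Real.norm_eq_abs, abs_of_nonneg (Real.exp_nonneg _)]
      have hd : ‖Set.IccExtend hT0 (⇑u) s - Set.IccExtend hT0 (⇑v) s‖ ≤ dist u v := by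
        rw [Set.IccExtend_apply, Set.IccExtend_apply, ← dist_eq_norm]
        exact ContinuousMap.dist_apply_le_dist _
      calc L * (Real.exp (lam * s) * ‖Set.IccExtend hT0 (⇑u) s - Set.IccExtend hT0 (⇑v) s‖)
          ≤ L * (Real.exp (lam * s) * dist u v) := by
            refine mul_le_mul_of_nonneg_left (mul_le_mul_of_nonneg_left hd (Real.exp_nonneg _)) hL.le
        _ = (L * dist u v) * Real.exp (lam * s) := by ring
    have hb := aux_bound (E := EuclideanSpace ℝ (Fin d)) hα hβ hlam
      (D := fun s => g (xf u s) - g (xf v s)) (t := t) ht.1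
      (A := L * dist u v) (by positivity) hDb
    rw [hQd, norm_smul, norm_smul, Real.norm_eq_abs, Real.abs_exp, Real.norm_eq_abs,
      abs_of_nonneg (by positivity : (0:ℝ) ≤ 1 / Real.Gamma α), hJd]
    calc Real.exp (-(lam * t)) * (1 / Real.Gamma α *
          ‖∫ w in (0:ℝ)..t, (w ^ (α - 1) * Real.exp (-(β * w))) •
            ((fun s => g (xf u s) - g (xf v s)) (t - w))‖)
        ≤ Real.exp (-(lam * t)) * (1 / Real.Gamma α *
            ((L * dist u v) * Real.exp (lam * t) * (Real.Gamma α / lam ^ α))) := by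
          refine mul_le_mul_of_nonneg_left (mul_le_mul_of_nonneg_left hb (by positivity))
            (Real.exp_nonneg _)
      _ = 1 / 2 * dist u v := by
          rw [hlam_pow, Real.exp_neg]
          have h1 := Real.exp_ne_zero (lam * t)
          have h2 := ne_of_gt hΓ
          have h3 := ne_of_gt hL
          field_simp
  have hcontract : ∀ u v : X, dist (Q u) (Q v) ≤ (1/2) * dist u v := fun u v =>
    (ContinuousMap.dist_le (by positivity)).2 (key u v)
  have hCW : ContractingWith (1/2 : NNReal) Q := by
    constructor
    · rw [← NNReal.coe_lt_coe]; norm_num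
    · apply LipschitzWith.of_dist_le_mul
      intro u v
      have := hcontract u v
      push_cast
      norm_num at this ⊢
      exact this
  haveI : CompactSpace (Set.Icc (0:ℝ) T) := isCompact_iff_compactSpace.mp isCompact_Icc
  set ust : X := ContractingWith.fixedPoint Q hCW with hust
  have hfix : Q ust = ust := hCW.fixedPoint_isFixedPt
  have hsol : ∀ u : X, Q u = u → ∀ t (ht : t ∈ Set.Icc (0:ℝ) T),
      xf u t = x₀ + (1 / Real.Gamma α) •
        ∫ s in (0:ℝ)..t, (((t - s) ^ (α - 1)) * Real.exp (-β * (t - s))) • g (xf u s) := by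
    intro u hu t ht
    have h2 : (Q u) ⟨t, ht⟩ = u ⟨t, ht⟩ := by rw [hu]
    have h3 : xf u t = x₀ + (1 / Real.Gamma α) • J u t := by
      show Real.exp (lam * t) • Set.IccExtend hT0 (⇑u) t = _
      rw [Set.IccExtend_of_mem hT0 _ ht, ← h2]
      show Real.exp (lam * t) •
        (Real.exp (-(lam * t)) • (x₀ + (1 / Real.Gamma α) • J u t)) = _
      rw [smul_smul, ← Real.exp_add]
      norm_num
    have h4 : (∫ s in (0:ℝ)..t,
        (((t - s) ^ (α - 1)) * Real.exp (-β * (t - s))) • g (xf u s)) = J u t := by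
      have h5 := intervalIntegral.integral_comp_sub_left (a := 0) (b := t)
        (fun w => (w ^ (α - 1) * Real.exp (-(β * w))) • g (xf u (t - w))) t
      simp only [sub_zero, sub_self] at h5
      rw [hJ]
      simp only
      rw [← h5]
      simp only [sub_sub_cancel, neg_mul]
    rw [h3, h4]
  refine ⟨xf ust, ⟨(hxfc ust).continuousOn, hsol ust hfix⟩, ?_⟩
  intro y hyc hyeq t ht
  set v : X := ⟨fun s => Real.exp (-(lam * s.1)) • y s.1, by
    refine Continuous.smul (f := fun s : Set.Icc (0:ℝ) T => Real.exp (-(lam * s.1)))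
      (g := fun s : Set.Icc (0:ℝ) T => y s.1) ?_ hyc.restrict
    exact Real.continuous_exp.comp (continuous_const.mul continuous_subtype_val).neg⟩ with hv
  have hvy : ∀ s, s ∈ Set.Icc (0:ℝ) T → xf v s = y s := by
    intro s hs
    show Real.exp (lam * s) • Set.IccExtend hT0 (⇑v) s = y s
    rw [Set.IccExtend_of_mem hT0 _ hs]
    show Real.exp (lam * s) • (Real.exp (-(lam * s)) • y s) = y s
    rw [smul_smul, ← Real.exp_add]
    norm_num
  have hvfix : Q v = v := by
    refine ContinuousMap.ext fun ss => ?_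
    obtain ⟨s, hs⟩ := ss
    show Real.exp (-(lam * s)) • (x₀ + (1 / Real.Gamma α) • J v s) =
      Real.exp (-(lam * s)) • y s
    congr 1
    have h7 : J v s = ∫ w in (0:ℝ)..s,
        (w ^ (α - 1) * Real.exp (-(β * w))) • g (y (s - w)) := by
      rw [hJ]
      simp only
      apply intervalIntegral.integral_congr
      intro w hw
      rw [Set.uIcc_of_le hs.1] at hw
      simp only
      rw [hvy (s - w) ⟨by linarith [hw.2], by linarith [hw.1, hs.2]⟩]
    have h6 : J v s = ∫ σ in (0:ℝ)..s,
        (((s - σ) ^ (α - 1)) * Real.exp (-β * (s - σ))) • g (y σ) := by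
      rw [h7]
      have h5 := intervalIntegral.integral_comp_sub_left (a := 0) (b := s)
        (fun w => (w ^ (α - 1) * Real.exp (-(β * w))) • g (y (s - w))) s
      simp only [sub_zero, sub_self] at h5
      rw [← h5]
      simp only [sub_sub_cancel, neg_mul]
    rw [h6, ← hyeq s hs]
  have hveq : v = ust := hCW.fixedPoint_unique hvfix
  rw [← hvy t ht, hveq]
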